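/- If v₁, v₂ ∈ Ha(F, x̄), then Cl²(F, x̄)(v₁, v₂) is nonempty. -/
import Mathlib


open Filter Topology

variable {X : Type*} [NormedAddCommGroup X] [NormedSpace ℝ X]

/-- The Hadamard (hypertangent) cone. -/
def Ha (F : Set X) (xbar : X) : Set X :=
  {h | ∃ U ∈ nhds xbar, ∃ W ∈ nhds h, ∃ lam > (0:ℝ),
    ∀ x' ∈ F ∩ U, ∀ lam' : ℝ, 0 < lam' → lam' ≤ lam → ∀ w ∈ W, x' + lam' • w ∈ F}

/-- The second-order Clarke tangent set. -/
def Cl2 (F : Set X) (xbar v1 v2 : X) : Set X :=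
  {v | ∀ V ∈ nhds (0:X), ∀ V1 ∈ nhds (0:X), ∀ V2 ∈ nhds (0:X),
    ∃ U ∈ nhds xbar, ∃ lam1 > (0:ℝ), ∃ lam2 > (0:ℝ),
      ∀ x' ∈ F ∩ U, ∀ lam' lam'' : ℝ, 0 < lam' → lam' ≤ lam1 → 0 < lam'' → lam'' ≤ lam2 →
        ∃ v' v'' u : X, v' - v1 ∈ V1 ∧ x' + lam' • v' ∈ F ∧
          v'' - v2 ∈ V2 ∧ x' + lam'' • v'' ∈ F ∧
          u - v ∈ V ∧ x' + lam' • v' + lam'' • v'' + (4 * lam' * lam'') • u ∈ F}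

theorem cl2_nonempty (F : Set X) (xbar : X) (hx : xbar ∈ F) (v1 v2 : X)
    (hv1 : v1 ∈ Ha F xbar) (hv2 : v2 ∈ Ha F xbar) :
    (Cl2 F xbar v1 v2).Nonempty := by
  obtain ⟨U1, hU1, W1, hW1, lam1, hlam1, h1⟩ := hv1
  obtain ⟨U2, hU2, W2, hW2, lam2, hlam2, h2⟩ := hv2
  refine ⟨0, ?_⟩
  intro V hV V1 hV1 V2 hV2
  obtain ⟨r, hr, hball⟩ := Metric.nhds_basis_ball.mem_iff.mp (Filter.inter_mem hU1 hU2)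
  have hden : (0:ℝ) < ‖v1‖ + 1 := by positivity
  refine ⟨Metric.ball xbar (r/2), Metric.ball_mem_nhds _ (by positivity),
    min lam1 (r / (2 * (‖v1‖ + 1))), by positivity, lam2, hlam2, ?_⟩
  rintro x' ⟨hxF, hxU⟩ lam' lam'' hl' hl'le hl'' hl''le
  have hx12 : x' ∈ Metric.ball xbar r := by
    rw [Metric.mem_ball] at hxU ⊢; linarith [hxU]
  have hxU1 : x' ∈ U1 := (hball hx12).1
  have hxU2 : x' ∈ U2 := (hball hx12).2
  have hstep1 : x' + lam' • v1 ∈ F :=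
    h1 x' ⟨hxF, hxU1⟩ lam' hl' (le_trans hl'le (min_le_left _ _)) v1 (mem_of_mem_nhds hW1)
  have hstep2 : x' + lam' • v1 ∈ U2 := by
    refine (hball ?_).2
    rw [Metric.mem_ball]
    have : ‖x' + lam' • v1 - xbar‖ ≤ ‖x' - xbar‖ + ‖lam' • v1‖ := by
      have := norm_add_le (x' - xbar) (lam' • v1); simpa [add_sub_right_comm] using this
    have h2' : ‖lam' • v1‖ ≤ (r / (2 * (‖v1‖ + 1))) * ‖v1‖ := by
      rw [norm_smul, Real.norm_eq_abs, abs_of_pos hl']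
      exact mul_le_mul_of_nonneg_right (le_trans hl'le (min_le_right _ _)) (norm_nonneg _)
    have h3' : (r / (2 * (‖v1‖ + 1))) * ‖v1‖ < r / 2 := by
      rw [div_mul_eq_mul_div, div_lt_div_iff₀ (by positivity) (by positivity)]
      nlinarith [norm_nonneg v1]
    rw [dist_eq_norm]
    rw [Metric.mem_ball, dist_eq_norm] at hxU
    calc ‖x' + lam' • v1 - xbar‖ ≤ ‖x' - xbar‖ + ‖lam' • v1‖ := this
      _ < r/2 + r/2 := by linarith
      _ = r := by ring
  have hstep3 : x' + lam' • v1 + lam'' • v2 ∈ F :=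
    h2 _ ⟨hstep1, hstep2⟩ lam'' hl'' hl''le v2 (mem_of_mem_nhds hW2)
  have hstep4 : x' + lam'' • v2 ∈ F :=
    h2 x' ⟨hxF, hxU2⟩ lam'' hl'' hl''le v2 (mem_of_mem_nhds hW2)
  refine ⟨v1, v2, 0, by simpa using mem_of_mem_nhds hV1, hstep1,
    by simpa using mem_of_mem_nhds hV2, hstep4,
    by simpa using mem_of_mem_nhds hV, by simpa using hstep3⟩
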